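/- (Stability Lemma for Generalized FTPL) Suppose Γ is (κ,δ)-admissible, let ε ≥ 0, let D be a (ρ, (1+2ε)/δ)-dispersed probability distribution on ℝ, let α = (α_1,…,α_N) have independent coordinates each with law D, and suppose that for every α the sequence x_1(α),…,x_{T+1}(α) is an ε-approximate Generalized-FTPL trajectory for α, with each map α ↦ x_t(α) measurable. Then E[ Σ_{t=1}^T ( f(x_{t+1}(α), y_t) − f(x_t(α), y_t) ) ] ≤ 2TNκρ. -/

import Mathlib

open Finset MeasureTheory
open scoped ENNReal

lemma meas_le_of_diam {D : Measure ℝ} {ρ L : ℝ} (hL : 0 ≤ L)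
    (hdisp : ∀ a : ℝ, D (Set.Icc a (a + L)) ≤ ENNReal.ofReal ρ)
    (E : Set ℝ) (hE : ∀ a ∈ E, ∀ b ∈ E, a ≤ b → b - a ≤ L) :
    D E ≤ ENNReal.ofReal ρ := by
  rcases E.eq_empty_or_nonempty with rfl | ⟨s₀, hs₀⟩
  · simp
  have hdiam : ∀ a ∈ E, ∀ b ∈ E, b - a ≤ L := by
    intro a ha b hb
    rcases le_total a b with h | h
    · exact hE a ha b hb h
    · linarith [hE b hb a ha h]
  have hbdd : BddBelow E := ⟨s₀ - L, fun s hs => by linarith [hdiam s hs s₀ hs₀]⟩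
  refine le_trans (measure_mono ?_) (hdisp (sInf E))
  intro s hs
  refine ⟨csInf_le hbdd hs, ?_⟩
  have h1 : s - L ≤ sInf E :=
    le_csInf ⟨s₀, hs₀⟩ (fun s' hs' => by linarith [hdiam s' hs' s hs])
  linarith

lemma slice_bound {X : Type*} (C G : X → ℝ) (v M δ ε ρ : ℝ) (hδ : 0 < δ) (hε : 0 ≤ ε)
    (hgap : ∀ z : X, G z ≠ v → δ ≤ |G z - v|)
    (D : Measure ℝ)
    (hdisp : ∀ a : ℝ, D (Set.Icc a (a + (1 + 2*ε)/δ)) ≤ ENNReal.ofReal ρ)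
    (S : Set ℝ)
    (hS : ∀ s ∈ S, (∀ z : X, C z + s * G z ≤ M + s * v + ε) ∧
          (∃ z : X, G z ≠ v ∧ M + s * v - 1 - ε ≤ C z + s * G z)) :
    D S ≤ 2 * ENNReal.ofReal ρ := by
  set L := (1 + 2*ε)/δ with hLdef
  have hL : 0 ≤ L := div_nonneg (by linarith) hδ.le
  set Ep := {s : ℝ | (∀ z : X, v < G z → C z + s * G z ≤ M + s * v + ε) ∧
      (∃ z : X, v < G z ∧ M + s * v - 1 - ε ≤ C z + s * G z)} with hEp
  set Em := {s : ℝ | (∀ z : X, G z < v → C z + s * G z ≤ M + s * v + ε) ∧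
      (∃ z : X, G z < v ∧ M + s * v - 1 - ε ≤ C z + s * G z)} with hEm
  have hsub : S ⊆ Ep ∪ Em := by
    intro s hs
    obtain ⟨hA, z, hz, hB⟩ := hS s hs
    rcases hz.lt_or_gt with h | h
    · exact Or.inr ⟨fun z' _ => hA z', z, h, hB⟩
    · exact Or.inl ⟨fun z' _ => hA z', z, h, hB⟩
  have hEpd : ∀ a ∈ Ep, ∀ b ∈ Ep, a ≤ b → b - a ≤ L := by
    intro a ha b hb hab
    obtain ⟨z, hz, hBz⟩ := ha.2
    have hAz := hb.1 z hz
    have hgap' : δ ≤ G z - v := by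
      have := hgap z (ne_of_gt hz)
      rwa [abs_of_pos (by linarith)] at this
    rw [hLdef, le_div_iff₀ hδ]
    nlinarith
  have hEmd : ∀ a ∈ Em, ∀ b ∈ Em, a ≤ b → b - a ≤ L := by
    intro a ha b hb hab
    obtain ⟨z, hz, hBz⟩ := hb.2
    have hAz := ha.1 z hz
    have hgap' : δ ≤ v - G z := by
      have := hgap z (ne_of_lt hz)
      rwa [abs_of_neg (by linarith), neg_sub] at this
    rw [hLdef, le_div_iff₀ hδ]
    nlinarith
  calc D S ≤ D (Ep ∪ Em) := measure_mono hsub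
    _ ≤ D Ep + D Em := measure_union_le _ _
    _ ≤ ENNReal.ofReal ρ + ENNReal.ofReal ρ :=
        add_le_add (meas_le_of_diam hL hdisp Ep hEpd) (meas_le_of_diam hL hdisp Em hEmd)
    _ = 2 * ENNReal.ofReal ρ := (two_mul _).symm

lemma rho_pos (D : Measure ℝ) [IsProbabilityMeasure D] (ρ L : ℝ) (hL0 : 0 < L)
    (hdisp : ∀ a : ℝ, D (Set.Icc a (a + L)) ≤ ENNReal.ofReal ρ) : 0 < ρ := by
  by_contra h
  push_neg at h
  have h0 : ∀ a : ℝ, D (Set.Icc a (a + L)) = 0 := fun a =>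
    le_antisymm (le_trans (hdisp a) (by simp [ENNReal.ofReal_eq_zero.2 h])) (zero_le)
  have hcover : (Set.univ : Set ℝ) ⊆ ⋃ k : ℤ, Set.Icc ((k : ℝ) * L) ((k : ℝ) * L + L) := by
    intro x _
    refine Set.mem_iUnion.2 ⟨⌊x / L⌋, ?_, ?_⟩
    · calc (⌊x / L⌋ : ℝ) * L ≤ (x / L) * L :=
          mul_le_mul_of_nonneg_right (Int.floor_le _) hL0.le
        _ = x := div_mul_cancel₀ x hL0.ne'
    · have h2 : x < ((⌊x / L⌋ : ℝ) + 1) * L := (div_lt_iff₀ hL0).1 (Int.lt_floor_add_one _)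
      nlinarith
  have hle : (1 : ℝ≥0∞) ≤ 0 := by
    calc (1 : ℝ≥0∞) = D Set.univ := measure_univ.symm
      _ ≤ ∑' k : ℤ, D (Set.Icc ((k : ℝ) * L) ((k : ℝ) * L + L)) :=
          (measure_mono hcover).trans (measure_iUnion_le _)
      _ = 0 := by simp [h0]
  simp at hle

theorem ftpl_stability
    {X Y : Type*} [Fintype X] [Nonempty X]
    (f : X → Y → ℝ) (hf : ∀ x y, f x y ∈ Set.Icc (0:ℝ) 1)
    (T : ℕ) (hT : 1 ≤ T) (y : ℕ → Y)
    (N : ℕ) (hN : 1 ≤ N)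
    (Γ : X → Fin N → ℝ) (hΓ : ∀ x j, Γ x j ∈ Set.Icc (0:ℝ) 1)
    (κ : ℕ) (δ : ℝ) (hδ : 0 < δ)
    -- (κ,δ)-admissibility:
    (hrows : ∀ x x' : X, x ≠ x' → ∃ j, Γ x j ≠ Γ x' j)
    (hcol : ∀ j : Fin N, (Finset.univ.image fun x => Γ x j).card ≤ κ)
    (hgap : ∀ (j : Fin N) (x x' : X), Γ x j ≠ Γ x' j → δ ≤ |Γ x j - Γ x' j|)
    (ε ρ : ℝ) (hε : 0 ≤ ε)
    (D : Measure ℝ) [IsProbabilityMeasure D]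
    (hdisp : ∀ a : ℝ, D (Set.Icc a (a + (1 + 2*ε)/δ)) ≤ ENNReal.ofReal ρ)
    (xtraj : (Fin N → ℝ) → ℕ → X)
    (hmeas : ∀ (t : ℕ) (x₀ : X), MeasurableSet {α : Fin N → ℝ | xtraj α t = x₀})
    (htraj : ∀ (α : Fin N → ℝ) (t : ℕ), 1 ≤ t → t ≤ T + 1 → ∀ x' : X,
      (∑ τ ∈ Finset.Icc 1 (t-1), f (xtraj α t) (y τ)) + (∑ j, α j * Γ (xtraj α t) j) ≥
      (∑ τ ∈ Finset.Icc 1 (t-1), f x' (y τ)) + (∑ j, α j * Γ x' j) - ε) :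
    ∫ α, (∑ t ∈ Finset.Icc 1 T, (f (xtraj α (t+1)) (y t) - f (xtraj α t) (y t)))
        ∂(Measure.pi fun _ : Fin N => D) ≤ 2 * T * N * κ * ρ := by
  classical
  have hρ : 0 < ρ := rho_pos D ρ _ (div_pos (by linarith) hδ) hdisp
  set μ : Measure (Fin N → ℝ) := Measure.pi fun _ : Fin N => D with hμdef
  haveI : IsProbabilityMeasure μ := by rw [hμdef]; infer_instance
  -- measurable structure on X
  letI : MeasurableSpace X := ⊤
  have hXmeas : ∀ t : ℕ, Measurable fun α => xtraj α t := by
    intro t s _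
    have hpre : (fun α => xtraj α t) ⁻¹' s = ⋃ x₀ ∈ s, {α | xtraj α t = x₀} := by
      ext α
      simp only [Set.mem_preimage, Set.mem_iUnion, Set.mem_setOf_eq]
      exact ⟨fun h => ⟨_, h, rfl⟩, fun ⟨x₀, hx₀, h⟩ => h ▸ hx₀⟩
    rw [hpre]
    exact MeasurableSet.biUnion s.to_countable fun x₀ _ => hmeas t x₀
  -- the key probability bound for one value in one column at one round
  have hstep : ∀ t : ℕ, 1 ≤ t → t ≤ T → ∀ j : Fin N,
      ∀ v ∈ Finset.univ.image fun x => Γ x j,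
      μ {α | Γ (xtraj α t) j = v ∧ Γ (xtraj α (t+1)) j ≠ v} ≤ 2 * ENNReal.ofReal ρ := by
    intro t ht1 htT j v hv
    obtain ⟨x₀, -, hx₀⟩ := Finset.mem_image.1 hv
    set Bv : Set (Fin N → ℝ) := {α | Γ (xtraj α t) j = v ∧ Γ (xtraj α (t+1)) j ≠ v} with hBvdef
    have hBv : MeasurableSet Bv := by
      have h1 : MeasurableSet ((fun α => xtraj α t) ⁻¹' {x : X | Γ x j = v}) :=
        hXmeas t trivial
      have h2 : MeasurableSet ((fun α => xtraj α (t+1)) ⁻¹' {x : X | Γ x j ≠ v}) :=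
        hXmeas (t+1) trivial
      exact h1.inter h2
    -- the group-v max
    have hne : (Finset.univ.filter fun w : X => Γ w j = v).Nonempty :=
      ⟨x₀, Finset.mem_filter.2 ⟨Finset.mem_univ _, hx₀⟩⟩
    -- slice bound for every fixed rest-coordinates x
    have key : ∀ x : Fin N → ℝ,
        ∫⁻ s, Bv.indicator (1 : (Fin N → ℝ) → ℝ≥0∞) (Function.update x j s) ∂D
          ≤ 2 * ENNReal.ofReal ρ := by
      intro x
      have hupd : Measurable (fun s : ℝ => Function.update x j s) := measurable_update x
      have heq : ∫⁻ s, Bv.indicator (1 : (Fin N → ℝ) → ℝ≥0∞) (Function.update x j s) ∂D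
          = D ((fun s : ℝ => Function.update x j s) ⁻¹' Bv) := by
        rw [← lintegral_indicator_one (hupd hBv)]
        refine lintegral_congr fun s => ?_
        by_cases hsB : Function.update x j s ∈ Bv <;>
          simp [Set.indicator_apply, hsB]
      rw [heq]
      set C : X → ℝ := fun z => (∑ τ ∈ Finset.Icc 1 (t-1), f z (y τ))
          + ∑ i ∈ Finset.univ.erase j, x i * Γ z i with hCdef
      set M : ℝ := (Finset.univ.filter fun w : X => Γ w j = v).sup' hne C with hMdef
      have hsum : ∀ (s : ℝ) (z : X), (∑ i, Function.update x j s i * Γ z i)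
          = s * Γ z j + ∑ i ∈ Finset.univ.erase j, x i * Γ z i := by
        intro s z
        rw [← Finset.add_sum_erase Finset.univ
              (fun i => Function.update x j s i * Γ z i) (Finset.mem_univ j),
            Function.update_self]
        congr 1
        exact Finset.sum_congr rfl fun i hi => by
          rw [Function.update_of_ne (Finset.ne_of_mem_erase hi)]
      refine slice_bound C (fun z => Γ z j) v M δ ε ρ hδ hε
        (fun z hz => hx₀ ▸ hgap j z x₀ (by rw [hx₀]; exact hz)) D hdisp _ ?_
      intro s hs
      have hs' : Γ (xtraj (Function.update x j s) t) j = v ∧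
          Γ (xtraj (Function.update x j s) (t+1)) j ≠ v := hs
      obtain ⟨hs1, hs2⟩ := hs'
      constructor
      · -- (A)
        intro z
        show C z + s * Γ z j ≤ M + s * v + ε
        have h := htraj (Function.update x j s) t ht1 (by omega) z
        rw [hsum s z, hsum s (xtraj (Function.update x j s) t), hs1] at h
        have hCM : C (xtraj (Function.update x j s) t) ≤ M :=
          Finset.le_sup' C (Finset.mem_filter.2 ⟨Finset.mem_univ _, hs1⟩)
        simp only [hCdef] at hCM ⊢
        linarith [h]
      · -- (B)
        obtain ⟨w, hw, hMw⟩ := Finset.exists_mem_eq_sup' hne C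
        have hwv : Γ w j = v := (Finset.mem_filter.1 hw).2
        have h := htraj (Function.update x j s) (t+1) (by omega) (by omega) w
        have hsplit : ∀ z : X, (∑ τ ∈ Finset.Icc 1 (t+1-1), f z (y τ))
            = (∑ τ ∈ Finset.Icc 1 (t-1), f z (y τ)) + f z (y t) := by
          intro z
          obtain ⟨t', rfl⟩ : ∃ t', t = t' + 1 := ⟨t - 1, (Nat.succ_pred_eq_of_pos ht1).symm⟩
          simp only [Nat.add_sub_cancel]
          have hins : Finset.Icc 1 (t'+1) = insert (t'+1) (Finset.Icc 1 t') := by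
            ext m
            simp only [Finset.mem_Icc, Finset.mem_insert]
            omega
          rw [hins, Finset.sum_insert (by simp [Finset.mem_Icc])]
          ring
        rw [hsplit (xtraj (Function.update x j s) (t+1)), hsplit w,
          hsum s w, hsum s (xtraj (Function.update x j s) (t+1)), hwv] at h
        refine ⟨xtraj (Function.update x j s) (t+1), hs2, ?_⟩
        have hf1 := (hf (xtraj (Function.update x j s) (t+1)) (y t)).2
        have hf2 := (hf w (y t)).1
        have hMC : M = C w := hMdef.trans hMw
        rw [hMC]
        simp only [hCdef]
        linarith [h]
    -- Fubini via lmarginal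
    have hμBv : μ Bv ≤ 2 * ENNReal.ofReal ρ := by
      have hconst : ∫⁻ _α : Fin N → ℝ, 2 * ENNReal.ofReal ρ ∂(Measure.pi fun _ : Fin N => D)
          = 2 * ENNReal.ofReal ρ := by simp
      rw [hμdef, ← lintegral_indicator_one hBv, ← hconst]
      refine lintegral_le_of_lmarginal_le {j} (measurable_one.indicator hBv)
        measurable_const ?_
      rw [Pi.le_def]
      intro x
      rw [lmarginal_singleton, lmarginal_singleton]
      refine le_trans (key x) ?_
      simp
    exact hμBv
  -- per-round probability of switching
  have hAt : ∀ t : ℕ, 1 ≤ t → t ≤ T →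
      μ {α | xtraj α t ≠ xtraj α (t+1)}
        ≤ (N : ℝ≥0∞) * ((κ : ℝ≥0∞) * (2 * ENNReal.ofReal ρ)) := by
    intro t ht1 htT
    have hBj : ∀ j : Fin N, μ {α | Γ (xtraj α t) j ≠ Γ (xtraj α (t+1)) j}
        ≤ (κ : ℝ≥0∞) * (2 * ENNReal.ofReal ρ) := by
      intro j
      have hsub : {α : Fin N → ℝ | Γ (xtraj α t) j ≠ Γ (xtraj α (t+1)) j}
          ⊆ ⋃ v ∈ (Finset.univ.image fun x => Γ x j),
              {α | Γ (xtraj α t) j = v ∧ Γ (xtraj α (t+1)) j ≠ v} := by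
        intro α hα
        exact Set.mem_biUnion (Finset.mem_image_of_mem _ (Finset.mem_univ (xtraj α t)))
          ⟨rfl, fun h => hα h.symm⟩
      calc μ {α : Fin N → ℝ | Γ (xtraj α t) j ≠ Γ (xtraj α (t+1)) j}
          ≤ ∑ v ∈ (Finset.univ.image fun x => Γ x j),
              μ {α | Γ (xtraj α t) j = v ∧ Γ (xtraj α (t+1)) j ≠ v} :=
            (measure_mono hsub).trans (measure_biUnion_finset_le _ _)
        _ ≤ ∑ _v ∈ (Finset.univ.image fun x => Γ x j), 2 * ENNReal.ofReal ρ :=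
            Finset.sum_le_sum fun v hv => hstep t ht1 htT j v hv
        _ = ((Finset.univ.image fun x => Γ x j).card : ℝ≥0∞) * (2 * ENNReal.ofReal ρ) := by
            rw [Finset.sum_const, nsmul_eq_mul]
        _ ≤ (κ : ℝ≥0∞) * (2 * ENNReal.ofReal ρ) :=
            mul_le_mul_left (Nat.cast_le.2 (hcol j)) _
    have hsub2 : {α : Fin N → ℝ | xtraj α t ≠ xtraj α (t+1)}
        ⊆ ⋃ j : Fin N, {α | Γ (xtraj α t) j ≠ Γ (xtraj α (t+1)) j} := by
      intro α hα
      obtain ⟨j, hj⟩ := hrows _ _ hα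
      exact Set.mem_iUnion.2 ⟨j, hj⟩
    calc μ {α : Fin N → ℝ | xtraj α t ≠ xtraj α (t+1)}
        ≤ ∑ j : Fin N, μ {α | Γ (xtraj α t) j ≠ Γ (xtraj α (t+1)) j} :=
          (measure_mono hsub2).trans (measure_iUnion_fintype_le μ _)
      _ ≤ ∑ _j : Fin N, (κ : ℝ≥0∞) * (2 * ENNReal.ofReal ρ) :=
          Finset.sum_le_sum fun j _ => hBj j
      _ = (N : ℝ≥0∞) * ((κ : ℝ≥0∞) * (2 * ENNReal.ofReal ρ)) := by
          rw [Finset.sum_const, Finset.card_univ, Fintype.card_fin, nsmul_eq_mul]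
  -- real-valued per-round bound
  have hAtR : ∀ t : ℕ, 1 ≤ t → t ≤ T →
      (μ {α | xtraj α t ≠ xtraj α (t+1)}).toReal ≤ 2 * N * κ * ρ := by
    intro t ht1 htT
    have hfin : ((N : ℝ≥0∞) * ((κ : ℝ≥0∞) * (2 * ENNReal.ofReal ρ))) ≠ ⊤ := by
      refine ENNReal.mul_ne_top (ENNReal.natCast_ne_top N)
        (ENNReal.mul_ne_top (ENNReal.natCast_ne_top κ)
          (ENNReal.mul_ne_top (by simp) ENNReal.ofReal_ne_top))
    have h := ENNReal.toReal_mono hfin (hAt t ht1 htT)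
    refine le_trans h (le_of_eq ?_)
    simp only [ENNReal.toReal_mul, ENNReal.toReal_ofReal hρ.le, ENNReal.toReal_natCast,
      ENNReal.toReal_ofNat]
    ring
  -- measurability and integrability
  have hFmeas : ∀ t u : ℕ, Measurable fun α => f (xtraj α t) (y u) := fun t u =>
    (measurable_from_top (f := fun x : X => f x (y u))).comp (hXmeas t)
  have hFint : ∀ t u : ℕ, Integrable (fun α => f (xtraj α t) (y u)) μ := by
    intro t u
    refine ⟨(hFmeas t u).aestronglyMeasurable, ?_⟩
    refine HasFiniteIntegral.of_bounded (C := 1) ?_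
    filter_upwards with α
    rw [Real.norm_eq_abs, abs_le]
    exact ⟨by linarith [(hf (xtraj α t) (y u)).1], (hf _ _).2⟩
  have hAmeas : ∀ t : ℕ, MeasurableSet {α : Fin N → ℝ | xtraj α t ≠ xtraj α (t+1)} := by
    intro t
    have h2 : {α : Fin N → ℝ | xtraj α t ≠ xtraj α (t+1)}
        = (⋃ x₀ : X, ({α | xtraj α t = x₀} ∩ {α | xtraj α (t+1) = x₀}))ᶜ := by
      ext α
      simp only [Set.mem_setOf_eq, Set.mem_compl_iff, Set.mem_iUnion, Set.mem_inter_iff]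
      constructor
      · rintro h ⟨x₀, h1, h2⟩; exact h (h1.trans h2.symm)
      · intro h heq; exact h ⟨xtraj α (t+1), heq, rfl⟩
    rw [h2]
    exact (MeasurableSet.iUnion fun x₀ => (hmeas t x₀).inter (hmeas (t+1) x₀)).compl
  have hIind : ∀ t : ℕ, Integrable
      (({α : Fin N → ℝ | xtraj α t ≠ xtraj α (t+1)}).indicator fun _ => (1:ℝ)) μ :=
    fun t => (integrable_const (1:ℝ)).indicator (hAmeas t)
  have hmono : ∀ α : Fin N → ℝ,
      (∑ t ∈ Finset.Icc 1 T, (f (xtraj α (t+1)) (y t) - f (xtraj α t) (y t)))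
      ≤ ∑ t ∈ Finset.Icc 1 T,
          ({α' : Fin N → ℝ | xtraj α' t ≠ xtraj α' (t+1)}).indicator (fun _ => (1:ℝ)) α := by
    intro α
    refine Finset.sum_le_sum fun t _ => ?_
    by_cases h : xtraj α t = xtraj α (t+1)
    · rw [h, sub_self]
      exact Set.indicator_nonneg (fun _ _ => zero_le_one) α
    · have hone : ({α' : Fin N → ℝ | xtraj α' t ≠ xtraj α' (t+1)}).indicator
          (fun _ => (1:ℝ)) α = 1 := Set.indicator_of_mem (show α ∈ {α' : Fin N → ℝ | xtraj α' t ≠ xtraj α' (t+1)} from h) _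
      rw [hone]
      linarith [(hf (xtraj α (t+1)) (y t)).2, (hf (xtraj α t) (y t)).1]
  calc ∫ α, (∑ t ∈ Finset.Icc 1 T, (f (xtraj α (t+1)) (y t) - f (xtraj α t) (y t))) ∂μ
      ≤ ∫ α, (∑ t ∈ Finset.Icc 1 T,
          ({α' : Fin N → ℝ | xtraj α' t ≠ xtraj α' (t+1)}).indicator (fun _ => (1:ℝ)) α) ∂μ := by
        refine integral_mono ?_ ?_ hmono
        · exact integrable_finset_sum _ fun t _ => (hFint (t+1) t).sub (hFint t t)
        · exact integrable_finset_sum _ fun t _ => hIind t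
    _ = ∑ t ∈ Finset.Icc 1 T,
          ∫ α, ({α' : Fin N → ℝ | xtraj α' t ≠ xtraj α' (t+1)}).indicator (fun _ => (1:ℝ)) α ∂μ :=
        integral_finset_sum _ fun t _ => hIind t
    _ = ∑ t ∈ Finset.Icc 1 T, (μ {α | xtraj α t ≠ xtraj α (t+1)}).toReal := by
        refine Finset.sum_congr rfl fun t _ => ?_
        rw [integral_indicator_const (1:ℝ) (hAmeas t), smul_eq_mul, mul_one]
        rfl
    _ ≤ ∑ _t ∈ Finset.Icc 1 T, 2 * N * κ * ρ := by
        refine Finset.sum_le_sum fun t ht => ?_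
        obtain ⟨h1, h2⟩ := Finset.mem_Icc.1 ht
        exact hAtR t h1 h2
    _ = 2 * T * N * κ * ρ := by
        rw [Finset.sum_const, Nat.card_Icc, nsmul_eq_mul]
        push_cast
        ring
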